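/- Fix k ∈ ℕ, u ∈ B_R and v ∈ B_R with q(u) > 0 and q(v) > 0. Let D_k^{(1)}(u,v) := ∑_{i=0}^{k} ‖Ψ_{t_i}(v) − Ψ_{t_i}(u)‖₁ and M_k(u,v) := max_{0≤i≤k} ‖H Ψ_{t_i}(v) − H Ψ_{t_i}(u)‖_∞. Then: (a) if ε ≥ M_k(u,v), the probability that v ∈ S_k is at least exp(−D_k^{(1)}(u,v)·‖H‖₁/ε); (b) if d_o = d and H is invertible, then for every ε > 0 the probability that v ∈ S_k is at most exp(−D_k^{(1)}(u,v)/(2ε·‖H⁻¹‖₁)). -/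

import Mathlib

open MeasureTheory ProbabilityTheory Set
open scoped ENNReal

noncomputable section

/-- The ℓ¹ norm on `ℝ^n`. -/
def norm1 {n : ℕ} (x : EuclideanSpace ℝ (Fin n)) : ℝ := ∑ j, |x j|

/-- The supremum norm on `ℝ^n`. -/
def normInf {n : ℕ} (x : EuclideanSpace ℝ (Fin n)) : ℝ := ⨆ j, |x j|

/-- The operator norm induced by the ℓ¹ norms. -/
def opNorm1 {n m : ℕ} (T : EuclideanSpace ℝ (Fin n) → EuclideanSpace ℝ (Fin m)) : ℝ :=
  sSup ((fun x => norm1 (T x)) '' {x | norm1 x ≤ 1})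

/-- The support of the smoothing distribution after observations `Y_0, …, Y_k`. -/
def smootherSupp {d dO : ℕ} {Ω : Type*}
    (Ψ : ℝ → EuclideanSpace ℝ (Fin d) → EuclideanSpace ℝ (Fin d))
    (H : EuclideanSpace ℝ (Fin d) →L[ℝ] EuclideanSpace ℝ (Fin dO))
    (q : EuclideanSpace ℝ (Fin d) → ℝ) (R h ε : ℝ)
    (u : EuclideanSpace ℝ (Fin d)) (Z : ℕ → Ω → EuclideanSpace ℝ (Fin dO))
    (k : ℕ) (ω : Ω) : Set (EuclideanSpace ℝ (Fin d)) :=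
  {x | ‖x‖ ≤ R ∧ 0 < q x ∧
    ∀ i ≤ k, normInf (H (Ψ (i * h) x) - (H (Ψ (i * h) u) + Z i ω)) ≤ ε}

/- ### Auxiliary lemmas -/

lemma norm1_nonneg' {n : ℕ} (x : EuclideanSpace ℝ (Fin n)) : 0 ≤ norm1 x :=
  Finset.sum_nonneg fun _ _ => abs_nonneg _

lemma norm1_zero' {n : ℕ} : norm1 (0 : EuclideanSpace ℝ (Fin n)) = 0 := by
  simp [norm1]

lemma euclid_sum_apply {n : ℕ} {ι : Type*} (s : Finset ι)
    (f : ι → EuclideanSpace ℝ (Fin n)) (j : Fin n) :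
    (∑ i ∈ s, f i) j = ∑ i ∈ s, f i j := by
  induction s using Finset.cons_induction with
  | empty => rfl
  | cons a s ha ih => simp [Finset.sum_cons, ih, PiLp.add_apply]

lemma norm1_sum_le' {n : ℕ} {ι : Type*} (s : Finset ι) (f : ι → EuclideanSpace ℝ (Fin n)) :
    norm1 (∑ i ∈ s, f i) ≤ ∑ i ∈ s, norm1 (f i) := by
  unfold norm1
  rw [Finset.sum_comm]
  refine Finset.sum_le_sum fun j _ => ?_
  rw [euclid_sum_apply]
  exact Finset.abs_sum_le_sum_abs _ _

lemma norm1_smul' {n : ℕ} (c : ℝ) (x : EuclideanSpace ℝ (Fin n)) :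
    norm1 (c • x) = |c| * norm1 x := by
  simp [norm1, PiLp.smul_apply, smul_eq_mul, abs_mul, Finset.mul_sum]

lemma euclid_eq_sum_single {n : ℕ} (x : EuclideanSpace ℝ (Fin n)) :
    x = ∑ j, x j • EuclideanSpace.single j (1:ℝ) := by
  ext i
  rw [euclid_sum_apply]
  simp [PiLp.smul_apply, EuclideanSpace.single_apply]

lemma norm1_clm_le {n m : ℕ} (T : EuclideanSpace ℝ (Fin n) →L[ℝ] EuclideanSpace ℝ (Fin m))
    (x : EuclideanSpace ℝ (Fin n)) :
    norm1 (T x) ≤ (∑ j, norm1 (T (EuclideanSpace.single j 1))) * norm1 x := by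
  conv_lhs => rw [euclid_eq_sum_single x, map_sum]
  calc norm1 (∑ j, T (x j • EuclideanSpace.single j (1:ℝ)))
      ≤ ∑ j, norm1 (T (x j • EuclideanSpace.single j (1:ℝ))) := norm1_sum_le' _ _
    _ = ∑ j, |x j| * norm1 (T (EuclideanSpace.single j (1:ℝ))) := by
        refine Finset.sum_congr rfl fun j _ => ?_
        rw [_root_.map_smul, norm1_smul']
    _ ≤ ∑ j, norm1 x * norm1 (T (EuclideanSpace.single j (1:ℝ))) := by
        refine Finset.sum_le_sum fun j _ => ?_
        refine mul_le_mul_of_nonneg_right ?_ (norm1_nonneg' _)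
        exact Finset.single_le_sum (f := fun i => |x i|) (fun i _ => abs_nonneg _)
          (Finset.mem_univ j)
    _ = _ := by rw [← Finset.mul_sum, mul_comm]

lemma bddAbove_op' {n m : ℕ} (T : EuclideanSpace ℝ (Fin n) →L[ℝ] EuclideanSpace ℝ (Fin m)) :
    BddAbove ((fun x => norm1 (T x)) '' {x | norm1 x ≤ 1}) := by
  refine ⟨∑ j, norm1 (T (EuclideanSpace.single j 1)), ?_⟩
  rintro y ⟨x, hx, rfl⟩
  calc norm1 (T x) ≤ _ * norm1 x := norm1_clm_le T x
  _ ≤ _ * 1 :=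
      mul_le_mul_of_nonneg_left hx (Finset.sum_nonneg fun _ _ => norm1_nonneg' _)
  _ = _ := mul_one _

lemma opNorm1_nonneg' {n m : ℕ} (T : EuclideanSpace ℝ (Fin n) →L[ℝ] EuclideanSpace ℝ (Fin m)) :
    0 ≤ opNorm1 (fun x => T x) := by
  refine le_csSup (bddAbove_op' T) ⟨0, by simp [norm1_zero'], ?_⟩
  simp [norm1_zero', map_zero]

lemma norm1_op_le' {n m : ℕ} (T : EuclideanSpace ℝ (Fin n) →L[ℝ] EuclideanSpace ℝ (Fin m))
    (x : EuclideanSpace ℝ (Fin n)) :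
    norm1 (T x) ≤ opNorm1 (fun y => T y) * norm1 x := by
  rcases eq_or_lt_of_le (norm1_nonneg' x) with h0 | h0
  · have hx : x = 0 := by
      ext i
      have h1 : ∀ j ∈ Finset.univ, |x j| = 0 :=
        (Finset.sum_eq_zero_iff_of_nonneg fun j _ => abs_nonneg _).1 h0.symm
      simpa using abs_eq_zero.1 (h1 i (Finset.mem_univ i))
    simp [hx, map_zero, norm1_zero', ← h0]
  · have h1 : norm1 ((norm1 x)⁻¹ • x) ≤ 1 := by
      rw [norm1_smul', abs_of_pos (inv_pos.2 h0), inv_mul_cancel₀ h0.ne']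
    have h2 : norm1 (T ((norm1 x)⁻¹ • x)) ≤ opNorm1 (fun y => T y) :=
      le_csSup (bddAbove_op' T) ⟨_, h1, rfl⟩
    rw [_root_.map_smul, norm1_smul', abs_of_pos (inv_pos.2 h0)] at h2
    calc norm1 (T x) = norm1 x * ((norm1 x)⁻¹ * norm1 (T x)) := by field_simp
    _ ≤ norm1 x * opNorm1 (fun y => T y) := mul_le_mul_of_nonneg_left h2 (norm1_nonneg' x)
    _ = _ := mul_comm _ _

lemma meas_coord' {dO : ℕ} (j : Fin dO) : Measurable fun z : EuclideanSpace ℝ (Fin dO) => z j :=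
  (measurable_pi_apply (X := fun _ : Fin dO => ℝ) j).comp (WithLp.measurable_ofLp 2 (Fin dO → ℝ))

lemma measurableSet_S' {dO : ℕ} (ε : ℝ) (w : EuclideanSpace ℝ (Fin dO)) :
    MeasurableSet {z : EuclideanSpace ℝ (Fin dO) | ∀ j, |w j - z j| ≤ ε} := by
  have : {z : EuclideanSpace ℝ (Fin dO) | ∀ j, |w j - z j| ≤ ε}
      = ⋂ j, (fun z : EuclideanSpace ℝ (Fin dO) => z j) ⁻¹' {t | |w j - t| ≤ ε} := by
    ext z; simp [Set.mem_iInter]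
  rw [this]
  refine MeasurableSet.iInter fun j => (meas_coord' j) ?_
  exact measurableSet_le (by fun_prop) measurable_const

lemma interval_len' (ε : ℝ) (a : ℝ) :
    min ε (a + ε) - max (-ε) (a - ε) = 2 * ε - |a| := by
  rcases le_or_gt 0 a with h | h
  · rw [abs_of_nonneg h, min_eq_left (by linarith), max_eq_right (by linarith)]; ring
  · rw [abs_of_neg h, min_eq_right (by linarith), max_eq_left (by linarith)]; ring

lemma ofReal_max_zero' (a : ℝ) : ENNReal.ofReal (max 0 a) = ENNReal.ofReal a := by
  rcases le_total a 0 with h | h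
  · rw [max_eq_left h, ENNReal.ofReal_zero, eq_comm, ENNReal.ofReal_eq_zero]; exact h
  · rw [max_eq_right h]

lemma meas_box' {dO : ℕ} (ε : ℝ) (hε : 0 < ε) (w : EuclideanSpace ℝ (Fin dO)) :
    ((ENNReal.ofReal ((2 * ε) ^ dO))⁻¹ •
        volume.restrict {z : EuclideanSpace ℝ (Fin dO) | ∀ j, |z j| ≤ ε})
      {z | ∀ j, |w j - z j| ≤ ε}
    = ENNReal.ofReal (∏ j, (max 0 (2 * ε - |w j|) / (2 * ε))) := by
  have h2ε : (0:ℝ) < 2 * ε := by linarith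
  have hS := measurableSet_S' ε w
  rw [Measure.smul_apply, Measure.restrict_apply hS, smul_eq_mul]
  have key : ∀ t y : ℝ, (|y - t| ≤ ε ∧ |t| ≤ ε) ↔
      (max (-ε) (y - ε) ≤ t ∧ t ≤ min ε (y + ε)) := by
    intro t y
    rw [abs_le, abs_le, max_le_iff, le_min_iff]
    constructor
    · rintro ⟨⟨a1, a2⟩, b1, b2⟩
      exact ⟨⟨by linarith, by linarith⟩, by linarith, by linarith⟩
    · rintro ⟨⟨a1, a2⟩, b1, b2⟩
      exact ⟨⟨by linarith, by linarith⟩, by linarith, by linarith⟩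
  have hset : {z : EuclideanSpace ℝ (Fin dO) | ∀ j, |w j - z j| ≤ ε} ∩ {z | ∀ j, |z j| ≤ ε}
      = (MeasurableEquiv.toLp 2 (Fin dO → ℝ)).symm ⁻¹'
        (Set.univ.pi fun j => Icc (max (-ε) (w j - ε)) (min ε (w j + ε))) := by
    ext z
    simp only [Set.mem_inter_iff, Set.mem_setOf_eq, Set.mem_preimage, Set.mem_pi,
      Set.mem_univ, forall_true_left, Set.mem_Icc]
    rw [← forall_and]
    exact forall_congr' fun j => key (z j) (w j)
  rw [hset, (EuclideanSpace.volume_preserving_symm_measurableEquiv_toLp (Fin dO)).measure_preimage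
    (MeasurableSet.univ_pi fun j => measurableSet_Icc).nullMeasurableSet,
    volume_pi_pi]
  simp only [Real.volume_Icc, interval_len' ε]
  rw [ENNReal.ofReal_prod_of_nonneg (fun j _ => by positivity)]
  simp only [ENNReal.ofReal_div_of_pos h2ε, ofReal_max_zero']
  simp only [div_eq_mul_inv]
  rw [Finset.prod_mul_distrib, Finset.prod_const, Finset.card_univ, Fintype.card_fin,
    ← ENNReal.inv_pow, ← ENNReal.ofReal_pow h2ε.le, mul_comm]

lemma exp_le_ratio' {ε a : ℝ} (hε : 0 < ε) (ha0 : 0 ≤ a) (ha : a ≤ ε) :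
    Real.exp (-(a / ε)) ≤ (2 * ε - a) / (2 * ε) := by
  set t := a / ε with ht
  have ht0 : 0 ≤ t := div_nonneg ha0 hε.le
  have ht1 : t ≤ 1 := (div_le_one hε).2 ha
  have h1 : (0:ℝ) < 1 + t := by linarith
  have h2 : Real.exp (-t) ≤ (1 + t)⁻¹ := by
    rw [Real.exp_neg]
    exact inv_anti₀ h1 (by linarith [Real.add_one_le_exp t])
  have h3 : (1 + t)⁻¹ ≤ 1 - t / 2 := by
    rw [← one_div, div_le_iff₀ h1]; nlinarith
  have h4 : (2 * ε - a) / (2 * ε) = 1 - t / 2 := by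
    rw [ht]; field_simp
  rw [h4]; linarith

lemma ratio_le_exp' {ε a : ℝ} (hε : 0 < ε) :
    max 0 (2 * ε - a) / (2 * ε) ≤ Real.exp (-(a / (2 * ε))) := by
  have h2ε : (0:ℝ) < 2 * ε := by linarith
  rcases le_total (2 * ε - a) 0 with h | h
  · rw [max_eq_left h, zero_div]
    exact (Real.exp_pos _).le
  · rw [max_eq_right h]
    have := Real.add_one_le_exp (-(a / (2 * ε)))
    have h5 : (2 * ε - a) / (2 * ε) = 1 - a / (2 * ε) := by field_simp
    linarith

lemma normInf_le_iff' {n : ℕ} {ε : ℝ} (hε : 0 ≤ ε) (x : EuclideanSpace ℝ (Fin n)) :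
    normInf x ≤ ε ↔ ∀ j, |x j| ≤ ε := by
  unfold normInf
  rcases Nat.eq_zero_or_pos n with h0 | h0
  · subst h0
    constructor
    · exact fun _ j => j.elim0
    · intro _
      rw [show (⨆ j : Fin 0, |x j|) = 0 from Real.iSup_of_isEmpty _]
      exact hε
  · haveI : Nonempty (Fin n) := ⟨⟨0, h0⟩⟩
    exact ciSup_le_iff (Set.Finite.bddAbove (Set.finite_range _))

/-- lower and upper bounds for the probability that a fixed point
`v ∈ B_R` belongs to the support of the smoother, in terms of
`D_k^{(1)}(u,v) = ∑_{i=0}^k ‖Ψ_{t_i}(v) - Ψ_{t_i}(u)‖₁`, for uniform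
observation noise on `[-ε, ε]^{d_o}`. -/
theorem prob_in_smoother_support_bounds {d dO : ℕ}
    (A : EuclideanSpace ℝ (Fin d) →L[ℝ] EuclideanSpace ℝ (Fin d))
    (B : EuclideanSpace ℝ (Fin d) →L[ℝ] EuclideanSpace ℝ (Fin d) →L[ℝ] EuclideanSpace ℝ (Fin d))
    (f : EuclideanSpace ℝ (Fin d))
    (R δ : ℝ) (hR : 0 < R) (hδ : 0 < δ)
    (htrap : ∀ x : EuclideanSpace ℝ (Fin d),
      ‖x‖ ∈ Icc R (R + δ) → (inner ℝ (f - A x - B x x) x : ℝ) ≤ 0)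
    (Ψ : ℝ → EuclideanSpace ℝ (Fin d) → EuclideanSpace ℝ (Fin d))
    (hΨ0 : ∀ x, ‖x‖ ≤ R → Ψ 0 x = x)
    (hΨR : ∀ x, ‖x‖ ≤ R → ∀ t : ℝ, 0 ≤ t → ‖Ψ t x‖ ≤ R)
    (hΨode : ∀ x, ‖x‖ ≤ R → ∀ t : ℝ, 0 ≤ t →
      HasDerivWithinAt (fun s => Ψ s x)
        (f - A (Ψ t x) - B (Ψ t x) (Ψ t x)) (Ici 0) t)
    (h : ℝ) (hh : 0 < h)
    (H : EuclideanSpace ℝ (Fin d) →L[ℝ] EuclideanSpace ℝ (Fin dO))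
    (ε : ℝ) (hε : 0 < ε)
    (Ω : Type*) [MeasurableSpace Ω] (μ : Measure Ω) [IsProbabilityMeasure μ]
    (Z : ℕ → Ω → EuclideanSpace ℝ (Fin dO))
    (hZmeas : ∀ i, Measurable (Z i))
    (hZindep : iIndepFun Z μ)
    (hZlaw : ∀ i, Measure.map (Z i) μ =
      (ENNReal.ofReal ((2 * ε) ^ dO))⁻¹ •
        volume.restrict {z : EuclideanSpace ℝ (Fin dO) | ∀ j, |z j| ≤ ε})
    (q : EuclideanSpace ℝ (Fin d) → ℝ) (hq : ∀ x, 0 ≤ q x)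
    (hqsupp : ∀ x : EuclideanSpace ℝ (Fin d), ¬ ‖x‖ ≤ R → q x = 0)
    (u : EuclideanSpace ℝ (Fin d)) (hu : ‖u‖ ≤ R) (hqu : 0 < q u)
    (v : EuclideanSpace ℝ (Fin d)) (hv : ‖v‖ ≤ R) (hqv : 0 < q v)
    (k : ℕ) :
    -- (a) lower bound, valid when `ε ≥ M_k(u,v)`
    ((∀ i ≤ k, normInf (H (Ψ (i * h) v) - H (Ψ (i * h) u)) ≤ ε) →
      ENNReal.ofReal (Real.exp
          (-(∑ i ∈ Finset.range (k + 1), norm1 (Ψ (i * h) v - Ψ (i * h) u)) *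
            opNorm1 (fun x : EuclideanSpace ℝ (Fin d) => H x) / ε)) ≤
        μ {ω | v ∈ smootherSupp Ψ H q R h ε u Z k ω}) ∧
    -- (b) upper bound, when `H` is invertible (in particular `d_o = d`)
    (∀ K : EuclideanSpace ℝ (Fin dO) →L[ℝ] EuclideanSpace ℝ (Fin d),
      (∀ x, K (H x) = x) → (∀ y, H (K y) = y) →
      μ {ω | v ∈ smootherSupp Ψ H q R h ε u Z k ω} ≤
        ENNReal.ofReal (Real.exp
          (-(∑ i ∈ Finset.range (k + 1), norm1 (Ψ (i * h) v - Ψ (i * h) u)) /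
            (2 * ε * opNorm1 (fun y : EuclideanSpace ℝ (Fin dO) => K y)))))  := by
  have h2ε : (0:ℝ) < 2 * ε := by linarith
  set w : ℕ → EuclideanSpace ℝ (Fin dO) :=
    fun i => H (Ψ (i * h) v) - H (Ψ (i * h) u) with hw
  set s : ℕ → ℝ := fun i => norm1 (Ψ (i * h) v - Ψ (i * h) u) with hs
  set P : ℕ → ℝ := fun i => ∏ j, (max 0 (2 * ε - |w i j|) / (2 * ε)) with hP
  have hPnn : ∀ i, 0 ≤ P i := fun i =>
    Finset.prod_nonneg fun j _ => div_nonneg (le_max_left _ _) h2ε.le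
  -- the event as an intersection
  have hE : {ω | v ∈ smootherSupp Ψ H q R h ε u Z k ω}
      = ⋂ i ∈ Finset.range (k + 1), Z i ⁻¹' {z | ∀ j, |w i j - z j| ≤ ε} := by
    ext ω
    simp only [Set.mem_setOf_eq, smootherSupp, Set.mem_iInter, Set.mem_preimage,
      Finset.mem_range, Nat.lt_succ_iff]
    have hcoord : ∀ (i : ℕ) (j : Fin dO),
        (H (Ψ (↑i * h) v) - (H (Ψ (↑i * h) u) + Z i ω)) j = w i j - Z i ω j := by
      intro i j
      simp only [hw, PiLp.sub_apply, PiLp.add_apply]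
      ring
    constructor
    · rintro ⟨-, -, hcond⟩ i hi j
      have h1 := (normInf_le_iff' hε.le _).1 (hcond i hi) j
      rwa [hcoord i j] at h1
    · intro hcond
      refine ⟨hv, hqv, fun i hi => ?_⟩
      rw [normInf_le_iff' hε.le]
      intro j
      rw [hcoord i j]
      exact hcond i hi j
  -- probability of the event
  have hone : ∀ i, μ (Z i ⁻¹' {z | ∀ j, |w i j - z j| ≤ ε}) = ENNReal.ofReal (P i) := by
    intro i
    rw [← Measure.map_apply (hZmeas i) (measurableSet_S' ε (w i)), hZlaw i]
    exact meas_box' ε hε (w i)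
  have hμE : μ {ω | v ∈ smootherSupp Ψ H q R h ε u Z k ω}
      = ENNReal.ofReal (∏ i ∈ Finset.range (k + 1), P i) := by
    rw [hE, hZindep.meas_biInter (fun i _ => ⟨_, measurableSet_S' ε (w i), rfl⟩)]
    rw [Finset.prod_congr rfl fun i _ => hone i]
    exact (ENNReal.ofReal_prod_of_nonneg (fun i _ => hPnn i)).symm
  constructor
  · -- (a)
    intro hM
    rw [hμE]
    apply ENNReal.ofReal_le_ofReal
    set opH : ℝ := opNorm1 (fun x : EuclideanSpace ℝ (Fin d) => H x) with hopH
    have hopHnn : 0 ≤ opH := opNorm1_nonneg' H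
    have hexp : Real.exp (-(∑ i ∈ Finset.range (k + 1), s i) * opH / ε)
        = ∏ i ∈ Finset.range (k + 1), Real.exp (-(s i * opH / ε)) := by
      rw [← Real.exp_sum]
      congr 1
      rw [Finset.sum_neg_distrib, ← Finset.sum_div, ← Finset.sum_mul, neg_mul, neg_div]
    rw [hexp]
    refine Finset.prod_le_prod (fun i _ => (Real.exp_pos _).le) (fun i hi => ?_)
    have hwij : ∀ j, |w i j| ≤ ε :=
      (normInf_le_iff' hε.le _).1 (hM i (Nat.lt_succ_iff.1 (Finset.mem_range.1 hi)))
    have hn1 : norm1 (w i) ≤ s i * opH := by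
      have h1 : norm1 (H (Ψ (i * h) v - Ψ (i * h) u)) ≤ opH * s i := norm1_op_le' H _
      rw [map_sub] at h1
      calc norm1 (w i) ≤ opH * s i := h1
      _ = s i * opH := mul_comm _ _
    calc Real.exp (-(s i * opH / ε)) ≤ Real.exp (-(norm1 (w i) / ε)) := by
          apply Real.exp_le_exp.2
          have h2 : norm1 (w i) / ε ≤ s i * opH / ε := by gcongr
          linarith
    _ = ∏ j, Real.exp (-(|w i j| / ε)) := by
          rw [← Real.exp_sum]
          congr 1
          rw [Finset.sum_neg_distrib, ← Finset.sum_div]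
          rfl
    _ ≤ P i := by
          refine Finset.prod_le_prod (fun j _ => (Real.exp_pos _).le) (fun j _ => ?_)
          rw [max_eq_right (by linarith [hwij j])]
          exact exp_le_ratio' hε (abs_nonneg _) (hwij j)
  · -- (b)
    intro K hKH hHK
    set c : ℝ := opNorm1 (fun y : EuclideanSpace ℝ (Fin dO) => K y) with hc
    rcases eq_or_lt_of_le (opNorm1_nonneg' K) with hc0 | hc0
    · rw [hc.trans hc0.symm, mul_zero, div_zero, Real.exp_zero, ENNReal.ofReal_one]
      exact prob_le_one
    · rw [hμE]
      apply ENNReal.ofReal_le_ofReal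
      have hden : (0:ℝ) < 2 * ε * c := by positivity
      have hexp : Real.exp (-(∑ i ∈ Finset.range (k + 1), s i) / (2 * ε * c))
          = ∏ i ∈ Finset.range (k + 1), Real.exp (-(s i / (2 * ε * c))) := by
        rw [← Real.exp_sum]
        congr 1
        rw [Finset.sum_neg_distrib, ← Finset.sum_div, neg_div]
      rw [hexp]
      refine Finset.prod_le_prod (fun i _ => hPnn i) (fun i _ => ?_)
      have hKw : K (w i) = Ψ (i * h) v - Ψ (i * h) u := by
        rw [hw]; simp only [map_sub, hKH]
      have hsc : s i ≤ c * norm1 (w i) := by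
        have h1 : norm1 (K (w i)) ≤ c * norm1 (w i) := norm1_op_le' K _
        rwa [hKw] at h1
      calc P i ≤ ∏ j, Real.exp (-(|w i j| / (2 * ε))) :=
            Finset.prod_le_prod
              (fun j _ => div_nonneg (le_max_left _ _) h2ε.le)
              (fun j _ => ratio_le_exp' hε)
      _ = Real.exp (-(norm1 (w i) / (2 * ε))) := by
            rw [← Real.exp_sum]
            congr 1
            rw [Finset.sum_neg_distrib, ← Finset.sum_div]
            rfl
      _ ≤ Real.exp (-(s i / (2 * ε * c))) := by
            apply Real.exp_le_exp.2
            have h3 : s i / (2 * ε * c) ≤ norm1 (w i) / (2 * ε) := by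
              rw [div_le_div_iff₀ hden h2ε]
              nlinarith [mul_le_mul_of_nonneg_right hsc h2ε.le]
            linarith
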